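/- Let r ≥ 2, let f_1, ..., f_ℓ be bounded completely multiplicative complex-valued functions, and let L_1, ..., L_ℓ : ℕ^r → ℕ be linear forms with positive integer coefficients. If the limit L' = lim_{N→∞} 𝔼_{m ∈ [N]^r, gcd(m)=1} ∏_{j=1}^ℓ f_j(L_j(m)) exists, then the limit lim_{N→∞} 𝔼_{m ∈ [N]^r} ∏_{j=1}^ℓ f_j(L_j(m)) exists and equals (1/ζ(r)) · (∑_{n=1}^∞ ∏_{j=1}^ℓ f_j(n) / n^r) · L'. -/

import Mathlib

open Filter Finset Real

/-- The real value of the Riemann zeta function at a natural number `r ≥ 2`. -/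
noncomputable def zetaR (r : ℕ) : ℝ := ∑' n : ℕ, (1 : ℝ) / (n : ℝ) ^ r

/-- The box `[a]^r` of lattice points with coordinates in `{1, …, a}`. -/
def box (r a : ℕ) : Finset (Fin r → ℕ) := Fintype.piFinset fun _ => Finset.Icc 1 a

lemma mem_box {r a : ℕ} {m : Fin r → ℕ} : m ∈ box r a ↔ ∀ i, m i ∈ Finset.Icc 1 a := by
  simp [_root_.box, Fintype.mem_piFinset]

lemma card_box (r a : ℕ) : (box r a).card = a ^ r := by
  simp [_root_.box, Fintype.card_piFinset, Nat.card_Icc]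

lemma box_decomp {r : ℕ} (hr : 1 ≤ r) {M : Type*} [AddCommMonoid M] (N : ℕ)
    (g : (Fin r → ℕ) → M) :
    ∑ m ∈ box r N, g m =
      ∑ d ∈ Finset.Icc 1 N,
        ∑ m ∈ (box r (N / d)).filter (fun m => Finset.univ.gcd m = 1),
          g (fun i => d * m i) := by
  have hne : (Finset.univ : Finset (Fin r)).Nonempty := ⟨⟨0, hr⟩, Finset.mem_univ _⟩
  obtain ⟨i0, -⟩ := hne
  rw [Finset.sum_sigma']
  refine (Finset.sum_nbij' (i := fun p => (fun i => p.1 * p.2 i : Fin r → ℕ))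
    (j := fun m => ⟨Finset.univ.gcd m, fun i => m i / Finset.univ.gcd m⟩)
    ?_ ?_ ?_ ?_ ?_).symm
  · rintro ⟨d, m⟩ hp
    simp only [Finset.mem_sigma, Finset.mem_Icc, Finset.mem_filter, mem_box] at hp
    obtain ⟨⟨hd1, hdN⟩, hm, -⟩ := hp
    rw [mem_box]
    intro i
    obtain ⟨h1, h2⟩ := hm i
    refine Finset.mem_Icc.mpr ⟨Nat.one_le_iff_ne_zero.mpr (by positivity), ?_⟩
    calc d * m i ≤ d * (N / d) := Nat.mul_le_mul_left d h2
    _ = (N / d) * d := mul_comm _ _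
    _ ≤ N := Nat.div_mul_le_self N d
  · intro m hm
    rw [mem_box] at hm
    set g0 := Finset.univ.gcd m with hg0
    have hdvd : ∀ i, g0 ∣ m i := fun i => Finset.gcd_dvd (Finset.mem_univ i)
    have hg0ne : g0 ≠ 0 := by
      intro h
      have h1 := Finset.gcd_eq_zero_iff.mp h i0 (Finset.mem_univ i0)
      have h2 := (Finset.mem_Icc.mp (hm i0)).1
      omega
    have hg0pos : 0 < g0 := Nat.pos_of_ne_zero hg0ne
    simp only [Finset.mem_sigma, Finset.mem_Icc, Finset.mem_filter, mem_box]
    refine ⟨⟨hg0pos, ?_⟩, fun i => ?_, ?_⟩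
    · exact le_trans (Nat.le_of_dvd (Finset.mem_Icc.mp (hm i0)).1 (hdvd i0))
        (Finset.mem_Icc.mp (hm i0)).2
    · have h1 := (Finset.mem_Icc.mp (hm i)).1
      have h2 := (Finset.mem_Icc.mp (hm i)).2
      exact ⟨Nat.one_le_div_iff hg0pos |>.mpr (Nat.le_of_dvd h1 (hdvd i)),
        Nat.div_le_div_right h2⟩
    · have key : (Finset.univ.gcd fun i => g0 * (m i / g0)) = g0 * Finset.univ.gcd (fun i => m i / g0) := by
        simpa using (Finset.gcd_mul_left (s := (Finset.univ : Finset (Fin r)))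
          (f := fun i => m i / g0) (a := g0))
      have hmg : (fun i => g0 * (m i / g0)) = m := by
        funext i; exact Nat.mul_div_cancel' (hdvd i)
      rw [hmg] at key
      have : g0 * Finset.univ.gcd (fun i => m i / g0) = g0 * 1 := by
        rw [← key, mul_one]
      exact Nat.eq_of_mul_eq_mul_left hg0pos this
  · rintro ⟨d, m⟩ hp
    simp only [Finset.mem_sigma, Finset.mem_Icc, Finset.mem_filter, mem_box] at hp
    obtain ⟨⟨hd1, hdN⟩, hm, hgcd⟩ := hp
    have hdne : d ≠ 0 := by omega
    have hg : (Finset.univ.gcd fun i => d * m i) = d := by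
      have := Finset.gcd_mul_left (s := (Finset.univ : Finset (Fin r)))
        (f := fun i => m i) (a := d)
      simp only [hgcd, mul_one] at this
      simpa using this
    have h2 : (fun i => (d * m i) / Finset.univ.gcd fun i => d * m i) = m := by
      funext i
      rw [hg, Nat.mul_div_cancel_left _ (Nat.pos_of_ne_zero hdne)]
    exact Sigma.ext hg (heq_of_eq h2)
  · intro m hm
    rw [mem_box] at hm
    funext i
    exact Nat.mul_div_cancel' (Finset.gcd_dvd (Finset.mem_univ i))
  · rintro ⟨d, m⟩ hp
    rfl


open ArithmeticFunction in
lemma sum_mu_divisors (g : ℕ) :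
    ∑ d ∈ g.divisors, moebius d = if g = 1 then 1 else 0 := by
  rw [← coe_mul_zeta_apply, moebius_mul_coe_zeta, one_apply]

open ArithmeticFunction in
lemma card_filter_dvd {r : ℕ} (M d : ℕ) (hd : 1 ≤ d) :
    ((box r M).filter (fun m => ∀ i, d ∣ m i)).card = (M / d) ^ r := by
  have : (box r M).filter (fun m => ∀ i, d ∣ m i) =
      Fintype.piFinset fun _ : Fin r => (Finset.Icc 1 M).filter (fun x => d ∣ x) := by
    ext m
    simp only [Finset.mem_filter, mem_box, Fintype.mem_piFinset]
    exact ⟨fun ⟨h1, h2⟩ => fun i => ⟨h1 i, h2 i⟩, fun h => ⟨fun i => (h i).1, fun i => (h i).2⟩⟩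
  rw [this, Fintype.card_piFinset]
  have h2 : ((Finset.Icc 1 M).filter (fun x => d ∣ x)).card = M / d := by
    rw [show Finset.Icc 1 M = Finset.Ioc 0 M from by rw [← Finset.Icc_add_one_left_eq_Ioc]; simp]
    exact Nat.Ioc_filter_dvd_card_eq_div M d
  simp [h2]

open ArithmeticFunction in
lemma card_prim {r : ℕ} (hr : 1 ≤ r) (M : ℕ) :
    ((((box r M).filter (fun m => Finset.univ.gcd m = 1)).card : ℤ)) =
      ∑ d ∈ Finset.Icc 1 M, moebius d * ((M / d : ℕ) : ℤ) ^ r := by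
  have hne : (Finset.univ : Finset (Fin r)).Nonempty := ⟨⟨0, hr⟩, Finset.mem_univ _⟩
  obtain ⟨i0, -⟩ := hne
  rw [Finset.card_filter]
  push_cast
  have step : ∀ m ∈ box r M, ((if Finset.univ.gcd m = 1 then (1:ℤ) else 0)) =
      ∑ d ∈ Finset.Icc 1 M, (if d ∣ Finset.univ.gcd m then moebius d else 0) := by
    intro m hm
    rw [mem_box] at hm
    set g := Finset.univ.gcd m with hgdef
    have hdvd : g ∣ m i0 := Finset.gcd_dvd (Finset.mem_univ i0)
    have hm0 : 1 ≤ m i0 := (Finset.mem_Icc.mp (hm i0)).1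
    have hgne : g ≠ 0 := fun h => by simp [h] at hdvd; omega
    have hgM : g ≤ M := le_trans (Nat.le_of_dvd hm0 hdvd) (Finset.mem_Icc.mp (hm i0)).2
    have hdiv : g.divisors = (Finset.Icc 1 M).filter (fun d => d ∣ g) := by
      ext d
      simp only [Nat.mem_divisors, Finset.mem_filter, Finset.mem_Icc]
      constructor
      · rintro ⟨hdg, -⟩
        have hd0 : d ≠ 0 := by rintro rfl; exact hgne (zero_dvd_iff.mp hdg)
        exact ⟨⟨Nat.one_le_iff_ne_zero.mpr hd0,
          le_trans (Nat.le_of_dvd (Nat.pos_of_ne_zero hgne) hdg) hgM⟩, hdg⟩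
      · rintro ⟨-, hdg⟩; exact ⟨hdg, hgne⟩
    rw [← sum_mu_divisors g, hdiv, Finset.sum_filter]
  rw [Finset.sum_congr rfl step, Finset.sum_comm]
  refine Finset.sum_congr rfl fun d hd => ?_
  have hd1 : 1 ≤ d := (Finset.mem_Icc.mp hd).1
  rw [← Finset.sum_filter]
  have : (box r M).filter (fun m => d ∣ Finset.univ.gcd m) =
      (box r M).filter (fun m => ∀ i, d ∣ m i) := by
    ext m
    simp [Finset.dvd_gcd_iff]
  rw [this, Finset.sum_const, card_filter_dvd M d hd1, nsmul_eq_mul, Nat.cast_pow, mul_comm, Int.natCast_div]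

lemma tendsto_nat_div_atTop (d : ℕ) (hd : 1 ≤ d) :
    Tendsto (fun N : ℕ => N / d) atTop atTop :=
  tendsto_atTop_atTop.mpr fun b => ⟨b * d, fun N hN =>
    (Nat.le_div_iff_mul_le (by omega)).mpr hN⟩

lemma tendsto_div_cast (d : ℕ) (hd : 1 ≤ d) :
    Tendsto (fun N : ℕ => ((N / d : ℕ) : ℝ) / (N : ℝ)) atTop (nhds (1 / (d:ℝ))) := by
  have hdpos : (0:ℝ) < d := by exact_mod_cast hd
  have hdne : (d:ℝ) ≠ 0 := ne_of_gt hdpos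
  have hlow : Tendsto (fun N : ℕ => 1/(d:ℝ) - 1/(N:ℝ)) atTop (nhds (1/(d:ℝ))) := by
    simpa using tendsto_const_nhds.sub (tendsto_one_div_atTop_nhds_zero_nat (𝕜 := ℝ))
  refine tendsto_of_tendsto_of_tendsto_of_le_of_le' hlow tendsto_const_nhds ?_ ?_
  · filter_upwards [eventually_ge_atTop 1] with N hN
    have hNpos : (0:ℝ) < N := by exact_mod_cast hN
    have hNne : (N:ℝ) ≠ 0 := ne_of_gt hNpos
    have hmod : d * (N / d) + N % d = N := Nat.div_add_mod N d
    have hmodlt : N % d < d := Nat.mod_lt N (by omega)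
    have hA : (N:ℝ) ≤ d * ((N / d : ℕ):ℝ) + d := by
      have := congrArg (fun x : ℕ => (x:ℝ)) hmod
      push_cast at this
      have h2 : ((N % d : ℕ):ℝ) ≤ d := by exact_mod_cast hmodlt.le
      linarith
    have key : ((N:ℝ) - d)/d ≤ ((N / d : ℕ):ℝ) := by
      rw [div_le_iff₀ hdpos]; nlinarith
    calc 1/(d:ℝ) - 1/(N:ℝ) = (((N:ℝ) - d)/d)/(N:ℝ) := by field_simp
    _ ≤ ((N / d : ℕ):ℝ)/(N:ℝ) := by gcongr
  · filter_upwards [eventually_ge_atTop 1] with N hN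
    have hNpos : (0:ℝ) < N := by exact_mod_cast hN
    calc ((N / d : ℕ):ℝ)/(N:ℝ) ≤ ((N:ℝ)/d)/(N:ℝ) := by gcongr; exact Nat.cast_div_le
    _ = 1/(d:ℝ) := by field_simp [ne_of_gt hNpos]

open ArithmeticFunction in
lemma prim_density {r : ℕ} (hr : 2 ≤ r) :
    Tendsto (fun M : ℕ =>
      ((((box r M).filter (fun m => Finset.univ.gcd m = 1)).card : ℝ) / (M:ℝ)^r))
      atTop (nhds (∑' d : ℕ, (moebius d : ℝ) / (d:ℝ)^r)) := by
  have hr1 : 1 ≤ r := by omega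
  set F : ℕ → ℕ → ℝ := fun M d =>
    if d ∈ Finset.Icc 1 M then (moebius d : ℝ) * (((M/d : ℕ):ℝ)/(M:ℝ))^r else 0 with hF
  have hrepr : ∀ M : ℕ,
      ((((box r M).filter (fun m => Finset.univ.gcd m = 1)).card : ℝ) / (M:ℝ)^r)
        = ∑' d, F M d := by
    intro M
    rw [tsum_eq_sum (s := Finset.Icc 1 M) (f := F M) (fun d hd => if_neg hd),
      Finset.sum_congr rfl (fun d hd => if_pos hd)]
    rcases Nat.eq_zero_or_pos M with hM | hM
    · simp [hM]
      exact Or.inr (by omega)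
    have hMne : (M:ℝ)^r ≠ 0 := by positivity
    have := card_prim hr1 M
    have hcast : ((((box r M).filter (fun m => Finset.univ.gcd m = 1)).card : ℝ))
        = ∑ d ∈ Finset.Icc 1 M, (moebius d : ℝ) * ((M / d : ℕ) : ℝ) ^ r := by
      have h3 := congrArg (fun z : ℤ => (z:ℝ)) this
      push_cast at h3
      exact h3
    rw [hcast, Finset.sum_div]
    refine Finset.sum_congr rfl fun d hd => ?_
    rw [div_pow]
    ring
  simp only [hrepr]
  refine tendsto_tsum_of_dominated_convergence
    (bound := fun d => 1/(d:ℝ)^r)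
    ((Real.summable_one_div_nat_pow).mpr hr) ?_ ?_
  · intro d
    rcases Nat.eq_zero_or_pos d with hd | hd
    · subst hd
      simp only [hF]
      have : ∀ M : ℕ, (if (0:ℕ) ∈ Finset.Icc 1 M then (moebius 0 : ℝ) * (((M/0 : ℕ):ℝ)/(M:ℝ))^r else 0) = 0 := by
        intro M
        simp
      simp only [this]
      simp
    · have htd : Tendsto (fun M : ℕ => (moebius d : ℝ) * (((M/d : ℕ):ℝ)/(M:ℝ))^r)
          atTop (nhds ((moebius d : ℝ) * (1/(d:ℝ))^r)) :=
        ((tendsto_div_cast d hd).pow r).const_mul _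
      have heq : (moebius d : ℝ) * (1/(d:ℝ))^r = (moebius d : ℝ)/(d:ℝ)^r := by
        rw [div_pow, one_pow, mul_one_div]
      rw [← heq]
      refine htd.congr' ?_
      filter_upwards [eventually_ge_atTop d] with M hM
      rw [hF]
      simp only [if_pos (Finset.mem_Icc.mpr ⟨hd, hM⟩)]
  · refine Eventually.of_forall fun M => fun d => ?_
    rw [hF]
    dsimp only
    split_ifs with h
    · obtain ⟨hd1, hdM⟩ := Finset.mem_Icc.mp h
      have hdpos : (0:ℝ) < d := by exact_mod_cast hd1
      have hMpos : (0:ℝ) < M := by exact_mod_cast (le_trans hd1 hdM)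
      have hmu : |(moebius d : ℝ)| ≤ 1 := by exact_mod_cast (abs_moebius_le_one (n := d))
      have hX0 : (0:ℝ) ≤ ((M/d : ℕ):ℝ)/(M:ℝ) := by positivity
      have hX : ((M/d : ℕ):ℝ)/(M:ℝ) ≤ 1/(d:ℝ) := by
        calc ((M/d : ℕ):ℝ)/(M:ℝ) ≤ ((M:ℝ)/d)/(M:ℝ) := by gcongr; exact Nat.cast_div_le
        _ = 1/(d:ℝ) := by field_simp [ne_of_gt hMpos]
      calc ‖(moebius d : ℝ) * (((M/d : ℕ):ℝ)/(M:ℝ))^r‖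
          = |(moebius d : ℝ)| * (((M/d : ℕ):ℝ)/(M:ℝ))^r := by
            rw [norm_mul, Real.norm_eq_abs, Real.norm_eq_abs, abs_pow, abs_of_nonneg hX0]
      _ ≤ 1 * (1/(d:ℝ))^r := by
            exact mul_le_mul hmu (pow_le_pow_left₀ hX0 hX r) (by positivity) zero_le_one
      _ = 1/(d:ℝ)^r := by rw [one_mul, div_pow, one_pow]
    · simp only [norm_zero]; positivity

open ArithmeticFunction in
lemma rho_zeta {r : ℕ} (hr : 2 ≤ r) :
    (∑' d : ℕ, (moebius d : ℝ) / (d:ℝ)^r) * (∑' n : ℕ, (1:ℝ)/(n:ℝ)^r) = 1 := by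
  have hr1 : 1 ≤ r := by omega
  set ρ := ∑' d : ℕ, (moebius d : ℝ) / (d:ℝ)^r with hρ
  set C : ℕ → ℕ := fun M => ((box r M).filter (fun m => Finset.univ.gcd m = 1)).card with hC
  have hdecomp : ∀ N : ℕ, (N:ℕ)^r = ∑ d ∈ Finset.Icc 1 N, C (N/d) := by
    intro N
    have := box_decomp hr1 N (fun _ => (1:ℕ))
    simpa [card_box] using this
  set G : ℕ → ℕ → ℝ := fun N d =>
    if d ∈ Finset.Icc 1 N then (C (N/d) : ℝ)/(N:ℝ)^r else 0 with hG
  have h1 : ∀ᶠ N in atTop, (fun N => ∑' d, G N d) N = 1 := by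
    filter_upwards [eventually_ge_atTop 1] with N hN
    have hNne : (N:ℝ)^r ≠ 0 := by positivity
    rw [tsum_eq_sum (s := Finset.Icc 1 N) (f := G N) (fun d hd => if_neg hd),
      Finset.sum_congr rfl (fun d hd => if_pos hd), ← Finset.sum_div]
    rw [show ∑ d ∈ Finset.Icc 1 N, (C (N/d) : ℝ) = ((N:ℕ)^r : ℝ) by
      exact_mod_cast (congrArg (fun z : ℕ => (z:ℝ)) (hdecomp N)).symm]
    push_cast
    field_simp
  have h2 : Tendsto (fun N => ∑' d, G N d) atTop
      (nhds (∑' d : ℕ, ρ * (1/(d:ℝ))^r)) := by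
    refine tendsto_tsum_of_dominated_convergence (bound := fun d => 1/(d:ℝ)^r)
      ((Real.summable_one_div_nat_pow).mpr hr) ?_ ?_
    · intro d
      rcases Nat.eq_zero_or_pos d with hd | hd
      · subst hd
        have hz : ρ * (1/((0:ℕ):ℝ))^r = 0 := by
          simp [zero_pow (show r ≠ 0 by omega)]
        rw [hz]
        have : ∀ N : ℕ, G N 0 = 0 := fun N => by simp [hG]
        simp only [this]
        exact tendsto_const_nhds
      · have hA : Tendsto (fun M : ℕ => (C M : ℝ)/(M:ℝ)^r) atTop (nhds ρ) :=
          prim_density hr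
        have hcomp : Tendsto (fun N : ℕ => (C (N/d) : ℝ)/((N/d : ℕ):ℝ)^r) atTop (nhds ρ) :=
          hA.comp (tendsto_nat_div_atTop d hd)
        have hmn : Tendsto (fun N : ℕ => (((N/d : ℕ):ℝ)/(N:ℝ))^r) atTop
            (nhds ((1/(d:ℝ))^r)) := (tendsto_div_cast d hd).pow r
        have := hcomp.mul hmn
        refine this.congr' ?_
        filter_upwards [eventually_ge_atTop d] with N hN
        have hM1 : 1 ≤ N / d := (Nat.le_div_iff_mul_le (by omega)).mpr (by omega)
        have hMne : ((N/d : ℕ):ℝ) ≠ 0 := by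
          have : (0:ℝ) < ((N/d : ℕ):ℝ) := by exact_mod_cast hM1
          exact ne_of_gt this
        have hNne : (N:ℝ) ≠ 0 := by
          have : (1:ℕ) ≤ N := le_trans hd hN
          positivity
        rw [hG]
        simp only [if_pos (Finset.mem_Icc.mpr ⟨hd, hN⟩)]
        rw [div_pow]
        field_simp
    · refine Eventually.of_forall fun N => fun d => ?_
      rw [hG]
      dsimp only
      split_ifs with h
      · obtain ⟨hd1, hdN⟩ := Finset.mem_Icc.mp h
        have hNpos : (0:ℝ) < N := by exact_mod_cast (le_trans hd1 hdN)
        have hdpos : (0:ℝ) < d := by exact_mod_cast hd1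
        have hCle : (C (N/d) : ℝ) ≤ ((N/d : ℕ):ℝ)^r := by
          have : C (N/d) ≤ (N/d) ^ r := by
            rw [hC]
            exact le_trans (Finset.card_filter_le _ _) (le_of_eq (card_box r (N/d)))
          exact_mod_cast this
        have hX : ((N/d : ℕ):ℝ) ≤ (N:ℝ)/(d:ℝ) := Nat.cast_div_le
        have key : (C (N/d) : ℝ)/(N:ℝ)^r ≤ 1/(d:ℝ)^r := by
          calc (C (N/d) : ℝ)/(N:ℝ)^r ≤ ((N:ℝ)/(d:ℝ))^r/(N:ℝ)^r := by
                gcongr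
                exact le_trans hCle (pow_le_pow_left₀ (by positivity) hX r)
          _ = 1/(d:ℝ)^r := by
                rw [div_pow]
                field_simp
        have hnn : (0:ℝ) ≤ (C (N/d) : ℝ)/(N:ℝ)^r := by positivity
        rw [Real.norm_eq_abs, abs_of_nonneg hnn]
        exact key
      · simp only [norm_zero]; positivity
  have h3 : Tendsto (fun N => ∑' d, G N d) atTop (nhds 1) :=
    Tendsto.congr' (h1.mono fun N hN => hN.symm) tendsto_const_nhds
  have h4 : (∑' d : ℕ, ρ * (1/(d:ℝ))^r) = 1 := tendsto_nhds_unique h2 h3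
  have h5 : (∑' d : ℕ, ρ * (1/(d:ℝ))^r) = ρ * ∑' d : ℕ, (1:ℝ)/(d:ℝ)^r := by
    rw [tsum_mul_left]
    congr 1
    exact tsum_congr fun d => by rw [div_pow, one_pow]
  rw [← h5, h4]

lemma cm_norm_le_one (f : ℕ → ℂ) (B : ℝ) (hfb : ∀ n, ‖f n‖ ≤ B) (hf1 : f 1 = 1)
    (hfmul : ∀ m n, f (m * n) = f m * f n) (n : ℕ) : ‖f n‖ ≤ 1 := by
  by_contra h
  push_neg at h
  have hpow : ∀ kk : ℕ, f (n ^ kk) = f n ^ kk := by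
    intro kk; induction kk with
    | zero => simpa using hf1
    | succ kk ih => rw [pow_succ, hfmul, ih, pow_succ]
  obtain ⟨kk, hkk⟩ := ((tendsto_pow_atTop_atTop_of_one_lt h).eventually_gt_atTop B).exists
  have hle : ‖f (n ^ kk)‖ ≤ B := hfb _
  rw [hpow, norm_pow] at hle
  linarith


theorem stmt10 (r ℓ : ℕ) (hr : 2 ≤ r)
    (f : Fin ℓ → ℕ → ℂ) (B : ℝ) (hfb : ∀ j n, ‖f j n‖ ≤ B)
    (hf1 : ∀ j, f j 1 = 1) (hfmul : ∀ j m n, f j (m * n) = f j m * f j n)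
    (k : Fin ℓ → Fin r → ℕ) (hk : ∀ j i, 1 ≤ k j i)
    (L' : ℂ)
    (hL' : Tendsto (fun N : ℕ =>
        (∑ m ∈ (box r N).filter (fun m => Finset.univ.gcd m = 1),
            ∏ j, f j (∑ i, k j i * m i)) /
          (((box r N).filter (fun m => Finset.univ.gcd m = 1)).card : ℂ))
      atTop (nhds L')) :
    Tendsto (fun N : ℕ =>
        (∑ m ∈ box r N, ∏ j, f j (∑ i, k j i * m i)) / ((box r N).card : ℂ))
      atTop
      (nhds ((1 / (zetaR r : ℂ)) *
        (∑' n : ℕ, (∏ j, f j n) / (n : ℂ) ^ r) * L')) := by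
  classical
  have hr1 : 1 ≤ r := by omega
  have i0 : Fin r := ⟨0, by omega⟩
  set ρ : ℝ := ∑' d : ℕ, (ArithmeticFunction.moebius d : ℝ) / (d:ℝ)^r with hρdef
  set C : ℕ → ℕ := fun M => ((box r M).filter (fun m => Finset.univ.gcd m = 1)).card with hC
  set P : ℕ → ℂ := fun d => ∏ j, f j d with hP
  set T : ℕ → ℂ := fun M => ∑ m ∈ (box r M).filter (fun m => Finset.univ.gcd m = 1),
    ∏ j, f j (∑ i, k j i * m i) with hT
  -- norm bounds
  have hnorm1 : ∀ j n, ‖f j n‖ ≤ 1 := fun j n =>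
    cm_norm_le_one (f j) B (hfb j) (hf1 j) (hfmul j) n
  have hPnorm : ∀ d, ‖P d‖ ≤ 1 := by
    intro d
    refine le_trans (norm_prod_le _ _) (Finset.prod_le_one (fun j _ => norm_nonneg _)
      (fun j _ => hnorm1 j d))
  have hprodnorm : ∀ m : Fin r → ℕ, ‖∏ j, f j (∑ i, k j i * m i)‖ ≤ 1 := by
    intro m
    refine le_trans (norm_prod_le _ _) (Finset.prod_le_one (fun j _ => norm_nonneg _)
      (fun j _ => hnorm1 j _))
  have hTnorm : ∀ M, ‖T M‖ ≤ (C M : ℝ) := by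
    intro M
    refine le_trans (norm_sum_le _ _) ?_
    calc ∑ m ∈ (box r M).filter (fun m => Finset.univ.gcd m = 1),
          ‖∏ j, f j (∑ i, k j i * m i)‖
        ≤ ∑ m ∈ (box r M).filter (fun m => Finset.univ.gcd m = 1), 1 :=
          Finset.sum_le_sum fun m _ => hprodnorm m
      _ = (C M : ℝ) := by simp [hC]
  -- key identity
  have hkey : ∀ N : ℕ, (∑ m ∈ box r N, ∏ j, f j (∑ i, k j i * m i))
      = ∑ d ∈ Finset.Icc 1 N, P d * T (N/d) := by
    intro N
    rw [box_decomp hr1 N (fun m => ∏ j, f j (∑ i, k j i * m i))]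
    refine Finset.sum_congr rfl fun d hd => ?_
    rw [hT]
    dsimp only
    rw [Finset.mul_sum]
    refine Finset.sum_congr rfl fun m hm => ?_
    have harg : ∀ j, (∑ i, k j i * (d * m i)) = d * ∑ i, k j i * m i := by
      intro j
      rw [Finset.mul_sum]
      exact Finset.sum_congr rfl fun i _ => by ring
    calc (∏ j, f j (∑ i, k j i * (d * m i)))
        = ∏ j, (f j d * f j (∑ i, k j i * m i)) := by
          refine Finset.prod_congr rfl fun j _ => ?_
          rw [harg j, hfmul j]
      _ = P d * ∏ j, f j (∑ i, k j i * m i) := Finset.prod_mul_distrib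
  -- representation as tsum
  set H : ℕ → ℕ → ℂ := fun N d =>
    if d ∈ Finset.Icc 1 N then P d * T (N/d) / (N:ℂ)^r else 0 with hH
  have hrepr : ∀ N : ℕ,
      (∑ m ∈ box r N, ∏ j, f j (∑ i, k j i * m i)) / ((box r N).card : ℂ)
        = ∑' d, H N d := by
    intro N
    rw [tsum_eq_sum (s := Finset.Icc 1 N) (f := H N) (fun d hd => if_neg hd),
      Finset.sum_congr rfl (fun d hd => if_pos hd), hkey, card_box, ← Finset.sum_div]
    push_cast
    rfl
  have hrw : (fun N : ℕ =>
      (∑ m ∈ box r N, ∏ j, f j (∑ i, k j i * m i)) / ((box r N).card : ℂ))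
      = fun N => ∑' d, H N d := funext hrepr
  rw [hrw]
  -- existence of elements with gcd 1
  have hCpos : ∀ M : ℕ, 1 ≤ M → 1 ≤ C M := by
    intro M hM
    rw [hC]
    refine Finset.card_pos.mpr ⟨fun _ => 1, Finset.mem_filter.mpr ⟨?_, ?_⟩⟩
    · exact mem_box.mpr fun i => Finset.mem_Icc.mpr ⟨le_refl 1, hM⟩
    · exact Nat.dvd_one.mp (Finset.gcd_dvd (Finset.mem_univ i0))
  -- dominated convergence
  have hdct : Tendsto (fun N => ∑' d, H N d) atTop
      (nhds (∑' d : ℕ, (P d * (1/(d:ℂ))^r) * (L' * (ρ:ℂ)))) := by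
    refine tendsto_tsum_of_dominated_convergence (bound := fun d => 1/(d:ℝ)^r)
      ((Real.summable_one_div_nat_pow).mpr hr) ?_ ?_
    · intro d
      rcases Nat.eq_zero_or_pos d with hd | hd
      · subst hd
        have hz : (P 0 * (1/((0:ℕ):ℂ))^r) * (L' * (ρ:ℂ)) = 0 := by
          simp [zero_pow (show r ≠ 0 by omega)]
        rw [hz]
        have hzz : ∀ N : ℕ, H N 0 = 0 := fun N => by simp [hH]
        simp only [hzz]
        exact tendsto_const_nhds
      · have hTC : Tendsto (fun N : ℕ => T (N/d) / (C (N/d) : ℂ)) atTop (nhds L') :=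
          hL'.comp (tendsto_nat_div_atTop d hd)
        have hCρR : Tendsto (fun M : ℕ => (C M : ℝ)/(M:ℝ)^r) atTop (nhds ρ) :=
          prim_density hr
        have hCρ : Tendsto (fun N : ℕ => (C (N/d) : ℂ)/((N/d : ℕ):ℂ)^r) atTop
            (nhds (ρ:ℂ)) := by
          have := (Complex.continuous_ofReal.tendsto ρ).comp
            (hCρR.comp (tendsto_nat_div_atTop d hd))
          refine this.congr fun N => ?_
          simp only [Function.comp_apply]
          push_cast
          rfl
        have hmn : Tendsto (fun N : ℕ => (((N/d : ℕ):ℂ)/(N:ℂ))^r) atTop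
            (nhds ((1/(d:ℂ))^r)) := by
          have := (Complex.continuous_ofReal.tendsto ((1/(d:ℝ))^r)).comp
            ((tendsto_div_cast d hd).pow r)
          have hcast : ((((1/(d:ℝ))^r : ℝ)) : ℂ) = (1/(d:ℂ))^r := by push_cast; rfl
          rw [← hcast]
          refine this.congr fun N => ?_
          simp only [Function.comp_apply]
          push_cast
          rfl
        have hmul := ((hTC.mul hCρ).mul hmn).const_mul (P d)
        have hval : (P d * (1/(d:ℂ))^r) * (L' * (ρ:ℂ)) = P d * (L' * (ρ:ℂ) * (1/(d:ℂ))^r) := by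
          ring
        rw [hval]
        refine hmul.congr' ?_
        · filter_upwards [eventually_ge_atTop d] with N hN
          have hM1 : 1 ≤ N / d := (Nat.le_div_iff_mul_le (by omega)).mpr (by omega)
          have hMne : ((N/d : ℕ):ℂ) ≠ 0 := Nat.cast_ne_zero.mpr (by omega)
          have hNne : (N:ℂ) ≠ 0 := Nat.cast_ne_zero.mpr (by omega)
          have hCne : ((C (N/d) : ℕ):ℂ) ≠ 0 := Nat.cast_ne_zero.mpr (by
            have := hCpos (N/d) hM1; omega)
          rw [hH]
          simp only [if_pos (Finset.mem_Icc.mpr ⟨hd, hN⟩)]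
          rw [div_pow]
          field_simp
    · refine Eventually.of_forall fun N => fun d => ?_
      rw [hH]
      dsimp only
      split_ifs with h
      · obtain ⟨hd1, hdN⟩ := Finset.mem_Icc.mp h
        have hNpos : (0:ℝ) < N := by exact_mod_cast (le_trans hd1 hdN)
        have hdpos : (0:ℝ) < d := by exact_mod_cast hd1
        have hCle : (C (N/d) : ℝ) ≤ ((N/d : ℕ):ℝ)^r := by
          have h2 : C (N/d) ≤ (N/d) ^ r := by
            rw [hC]
            exact le_trans (Finset.card_filter_le _ _) (le_of_eq (card_box r (N/d)))
          exact_mod_cast h2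
        have hX : ((N/d : ℕ):ℝ) ≤ (N:ℝ)/(d:ℝ) := Nat.cast_div_le
        have hnormeq : ‖P d * T (N/d) / (N:ℂ)^r‖
            = ‖P d‖ * ‖T (N/d)‖ / (N:ℝ)^r := by
          rw [norm_div, norm_mul, norm_pow, Complex.norm_natCast]
        rw [hnormeq]
        calc ‖P d‖ * ‖T (N/d)‖ / (N:ℝ)^r ≤ 1 * (C (N/d) : ℝ) / (N:ℝ)^r := by
              gcongr
              · exact hPnorm d
              · exact hTnorm (N/d)
          _ = (C (N/d) : ℝ) / (N:ℝ)^r := by rw [one_mul]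
          _ ≤ ((N:ℝ)/(d:ℝ))^r/(N:ℝ)^r := by
              gcongr
              exact le_trans hCle (pow_le_pow_left₀ (by positivity) hX r)
          _ = 1/(d:ℝ)^r := by
              rw [div_pow]
              field_simp
      · simp only [norm_zero]; positivity
  -- identify the limit
  have hζ := rho_zeta (r := r) hr
  have hzne : zetaR r ≠ 0 := by
    intro h
    rw [zetaR] at h
    rw [h, mul_zero] at hζ
    exact zero_ne_one hζ
  have hρval : ρ = 1 / zetaR r := by
    rw [eq_div_iff hzne]
    exact hζ
  have hfinal : (∑' d : ℕ, (P d * (1/(d:ℂ))^r) * (L' * (ρ:ℂ)))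
      = (1 / (zetaR r : ℂ)) * (∑' n : ℕ, (∏ j, f j n) / (n : ℂ) ^ r) * L' := by
    rw [tsum_mul_right]
    have hts : (∑' d : ℕ, P d * (1/(d:ℂ))^r) = ∑' n : ℕ, (∏ j, f j n) / (n : ℂ) ^ r := by
      refine tsum_congr fun d => ?_
      rw [div_pow, one_pow, mul_one_div, hP]
    rw [hts, hρval]
    push_cast
    ring
  rw [← hfinal]
  exact hdct
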